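/- Let G be a splittable directed graph and C₁ ≠ C₂ distinct source-equivalence classes of inconsistent edges with C₁ ∈ coupled⁺(C₂). Then coupled⁺(C₁) ⊊ coupled⁺(C₂). -/

import Mathlib

namespace CQA

variable {V : Type*}

/-- Directed reachability along edges in `A`. -/
def reach (A : Set (V × V)) (u v : V) : Prop :=
  Relation.ReflTransGen (fun x y => (x, y) ∈ A) u v

/-- `u` and `v` are in the same strongly connected component of the graph with edges `E`. -/
def sameSCC (E : Set (V × V)) (u v : V) : Prop := reach E u v ∧ reach E v u

/-- There is an undirected path in `E` from `a` to `b` all of whose vertices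
(including the endpoints) avoid the set `A`. -/
def ureach (E : Set (V × V)) (A : Set V) (a b : V) : Prop :=
  a ∉ A ∧ Relation.ReflTransGen (fun x y => ((x, y) ∈ E ∨ (y, x) ∈ E) ∧ y ∉ A) a b

/-- `u_R^{+,R}`: vertices reachable from the source of `R` in `G − {R}`. -/
def uplus (E : Set (V × V)) (R : V × V) : Set V := {v | reach (E \ {R}) R.1 v}

/-- `u^⊕`: vertices reachable from `u` using only consistent edges `Ec`. -/
def uoplus (Ec : Set (V × V)) (u : V) : Set V := {v | reach Ec u v}

/-- `C` is a source-equivalence class of inconsistent edges `Ei`. -/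
def IsClass (E Ei : Set (V × V)) (C : Set (V × V)) : Prop :=
  ∃ R ∈ Ei, C = {S ∈ Ei | sameSCC E R.1 S.1}

/-- `C^⊕ = ⋂_{R ∈ C} u_R^⊕`. -/
def Coplus (Ec : Set (V × V)) (C : Set (V × V)) : Set V :=
  {v | ∀ R ∈ C, v ∈ uoplus Ec R.1}

/-- `C⁺ = ⋂_{R ∈ C} u_R^{+,R}`. -/
def Cplus (E : Set (V × V)) (C : Set (V × V)) : Set V :=
  {v | ∀ R ∈ C, v ∈ uplus E R}

/-- `C₁ ≤⊕ C₂` iff some `S ∈ C₂` has `u_S ∈ C₁^⊕`. -/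
def leOplus (Ec : Set (V × V)) (C₁ C₂ : Set (V × V)) : Prop :=
  ∃ S ∈ C₂, S.1 ∈ Coplus Ec C₁

/-- The strict order `C₁ <⊕ C₂`. -/
def ltOplus (Ec : Set (V × V)) (C₁ C₂ : Set (V × V)) : Prop :=
  leOplus Ec C₁ C₂ ∧ C₁ ≠ C₂

/-- A sink: a maximal element of `<⊕` among source-equivalence classes. -/
def IsSink (E Ei Ec : Set (V × V)) (C : Set (V × V)) : Prop :=
  IsClass E Ei C ∧ ∀ C', IsClass E Ei C' → ¬ ltOplus Ec C C'

/-- `C' ∈ coupled⊕(C)`. -/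
def coupledOplusCl (E Ec : Set (V × V)) (C C' : Set (V × V)) : Prop :=
  C' = C ∨ ∃ R ∈ C, ∃ S ∈ C', ureach E (Coplus Ec C) R.2 S.1

/-- `C' ∈ coupled⁺(C)`. -/
def coupledPlusCl (E : Set (V × V)) (C C' : Set (V × V)) : Prop :=
  C' = C ∨ ∃ R ∈ C, ∃ S ∈ C', ureach E (Cplus E C) R.2 S.1

/-- `S ∈ coupled⁺(R)` for inconsistent edges `R, S`:
either `S ∈ [R]`, or there is an undirected path `v_R ↔ u_S` avoiding `u_R^{+,R}`. -/
def coupledPlusEdge (E Ei : Set (V × V)) (R S : V × V) : Prop :=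
  S ∈ Ei ∧ (sameSCC E R.1 S.1 ∨ ureach E (uplus E R) R.2 S.1)

/-- `G` is splittable: every coupled pair of inconsistent edges is source-equivalent. -/
def Splittable (E Ec : Set (V × V)) : Prop :=
  ∀ R ∈ E \ Ec, ∀ S ∈ E \ Ec,
    coupledPlusEdge E (E \ Ec) R S → coupledPlusEdge E (E \ Ec) S R → sameSCC E R.1 S.1

/-- `G` is f-closed: for every inconsistent edge `R`,
`v_R^⊕ ∩ u_R^{+,R} ⊆ u_R^⊕`. -/
def FClosed (E Ec : Set (V × V)) : Prop :=
  ∀ R ∈ E \ Ec, ∀ v, v ∈ uoplus Ec R.2 → v ∈ uplus E R → v ∈ uoplus Ec R.1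

end CQA

section Aux

open CQA

variable {V : Type*}

lemma ureach_endpoint {E : Set (V × V)} {A : Set V} {a b : V} (h : ureach E A a b) : b ∉ A := by
  obtain ⟨ha, p⟩ := h
  induction p with
  | refl => exact ha
  | tail p s ih => exact s.2

lemma reach_mono {A B : Set (V × V)} (hAB : A ⊆ B) {a b : V} (h : reach A a b) :
    reach B a b :=
  Relation.ReflTransGen.mono (fun x y hxy => hAB hxy) a b h

lemma uplus_reach {E : Set (V × V)} {R : V × V} {x : V} (hx : x ∈ uplus E R) :
    reach E R.1 x :=
  reach_mono Set.diff_subset hx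

lemma uplus_closed {E : Set (V × V)} {R : V × V} {a b : V} (ha : a ∈ uplus E R)
    (h : reach (E \ {R}) a b) : b ∈ uplus E R :=
  Relation.ReflTransGen.trans ha h

lemma reach_split {E : Set (V × V)} (R : V × V) {a b : V} (h : reach E a b) :
    reach (E \ {R}) a b ∨ reach E a R.1 := by
  induction h with
  | refl => exact Or.inl .refl
  | @tail x c p s ih =>
    rcases ih with ih | ih
    · by_cases hxc : (x, c) = R
      · have hx : x = R.1 := congrArg Prod.fst hxc
        exact Or.inr (hx ▸ reach_mono Set.diff_subset ih)
      · exact Or.inl (ih.tail ⟨s, hxc⟩)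
    · exact Or.inr ih

lemma reach_source_split {E : Set (V × V)} {R : V × V} (hR : R ∈ E) {b : V}
    (h : reach E R.1 b) : b ∈ uplus E R ∨ reach (E \ {R}) R.2 b := by
  induction h with
  | refl => exact Or.inl .refl
  | @tail x c p s ih =>
    by_cases hxc : (x, c) = R
    · have hc : c = R.2 := congrArg Prod.snd hxc
      exact Or.inr (by rw [hc]; exact .refl)
    · rcases ih with ih | ih
      · exact Or.inl (ih.tail ⟨s, hxc⟩)
      · exact Or.inr (ih.tail ⟨s, hxc⟩)

lemma reach_avoid_ureach {E B : Set (V × V)} {A : Set V} (hBE : B ⊆ E)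
    (hcl : ∀ x y, x ∈ A → (x, y) ∈ B → y ∈ A) {a b : V}
    (h : Relation.ReflTransGen (fun x y => (x, y) ∈ B) a b) (hb : b ∉ A) :
    ureach E A a b := by
  induction h using Relation.ReflTransGen.head_induction_on with
  | refl => exact ⟨hb, .refl⟩
  | @head a c s p ih =>
    obtain ⟨hc, q⟩ := ih
    exact ⟨fun ha => hc (hcl _ _ ha s), Relation.ReflTransGen.head ⟨Or.inl (hBE s), hc⟩ q⟩

lemma ureach_tail {E : Set (V × V)} {A : Set V} {a b c : V} (h : ureach E A a b)
    (e : (b, c) ∈ E ∨ (c, b) ∈ E) (hc : c ∉ A) : ureach E A a c :=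
  ⟨h.1, h.2.tail ⟨e, hc⟩⟩

lemma ureach_trans {E : Set (V × V)} {A : Set V} {a b c : V} (h1 : ureach E A a b)
    (h2 : ureach E A b c) : ureach E A a c :=
  ⟨h1.1, h1.2.trans h2.2⟩

lemma ureach_symm {E : Set (V × V)} {A : Set V} {a b : V} (h : ureach E A a b) :
    ureach E A b a := by
  obtain ⟨ha, p⟩ := h
  induction p with
  | refl => exact ⟨ha, .refl⟩
  | @tail x c p s ih =>
    exact ⟨s.2, Relation.ReflTransGen.head ⟨Or.symm s.1, ih.1⟩ ih.2⟩

lemma edge_adjust {E : Set (V × V)} {X : V × V} {u u' : V}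
    (hw : ureach E (uplus E X) X.2 u) (hr : reach E u u') :
    u' ∈ uplus E X ∨ ureach E (uplus E X) X.2 u' := by
  induction hr with
  | refl => exact Or.inr hw
  | @tail x c p s ih =>
    by_cases hc : c ∈ uplus E X
    · exact Or.inl hc
    · rcases ih with hx | w
      · by_cases hxc : (x, c) = X
        · have h2 : c = X.2 := congrArg Prod.snd hxc
          refine Or.inr ?_
          rw [h2]
          exact ⟨hw.1, .refl⟩
        · exact absurd (uplus_closed hx (Relation.ReflTransGen.single ⟨s, hxc⟩)) hc
      · exact Or.inr (ureach_tail w (Or.inl s) hc)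

lemma s2_lemma {E : Set (V × V)} {X S : V × V} {y : V}
    (hw : ureach E (uplus E X) X.2 S.1) (hyS : reach E y S.1)
    (hn : ¬ sameSCC E X.1 y) : y ∉ uplus E X := by
  intro hy
  have hS1 : S.1 ∉ uplus E X := ureach_endpoint hw
  rcases reach_split X hyS with h | h
  · exact hS1 (uplus_closed hy h)
  · exact hn ⟨uplus_reach hy, h⟩

lemma reach_decomp {E B : Set (V × V)} (hBE : B ⊆ E) {A : Set V} {a b : V}
    (h : Relation.ReflTransGen (fun x y => (x, y) ∈ B) a b) :
    (∃ c ∈ A, Relation.ReflTransGen (fun x y => (x, y) ∈ B) a c ∧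
       Relation.ReflTransGen (fun x y => (x, y) ∈ B) c b) ∨
    (a ∉ A → ureach E A a b) := by
  induction h with
  | refl =>
    by_cases ha : a ∈ A
    · exact Or.inl ⟨a, ha, .refl, .refl⟩
    · exact Or.inr fun h' => ⟨h', .refl⟩
  | @tail x c p s ih =>
    by_cases hc : c ∈ A
    · exact Or.inl ⟨c, hc, p.tail s, .refl⟩
    · rcases ih with ⟨d, hd, p1, p2⟩ | f
      · exact Or.inl ⟨d, hd, p1, p2.tail s⟩
      · exact Or.inr fun ha => ureach_tail (f ha) (Or.inl (hBE s)) hc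

/-- The key lemma: if `X ⇒ Y` (edge-level coupling), the sources of `X` and `Y` are not
in the same SCC, and `z` is `ureach`-able from `Y.2` avoiding `uplus E Y`, then
`z ∉ uplus E X`. -/
lemma lemmaZ {E Ec : Set (V × V)} (hsp : Splittable E Ec) {X Y : V × V}
    (hX : X ∈ E \ Ec) (hY : Y ∈ E \ Ec)
    (hfwd : ureach E (uplus E X) X.2 Y.1)
    (hn : ¬ sameSCC E X.1 Y.1)
    {z : V} (hq : ureach E (uplus E Y) Y.2 z) :
    z ∉ uplus E X := by
  intro hz
  have hY1X : Y.1 ∉ uplus E X := ureach_endpoint hfwd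
  have hzY : z ∉ uplus E Y := ureach_endpoint hq
  by_cases hX1Y : X.1 ∈ uplus E Y
  · have hx1z : reach E X.1 z := uplus_reach hz
    rcases reach_split Y hx1z with h | h
    · exact hzY (uplus_closed hX1Y h)
    · exact hn ⟨h, uplus_reach hX1Y⟩
  · rcases reach_decomp Set.diff_subset (A := uplus E Y) hz with ⟨c, hcY, p1, p2⟩ | f
    · have hcX : c ∈ uplus E X := p1
      have hcz : reach E c z := reach_mono Set.diff_subset p2
      have hcY1 : reach E c Y.1 := by
        rcases reach_split Y hcz with h | h
        · exact absurd (uplus_closed hcY h) hzY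
        · exact h
      have hcX1 : reach E c X.1 := by
        rcases reach_split X hcY1 with h | h
        · exact absurd (uplus_closed hcX h) hY1X
        · exact h
      exact hn ⟨(uplus_reach hcX).trans hcY1, (uplus_reach hcY).trans hcX1⟩
    · have hb : ureach E (uplus E Y) X.1 z := f hX1Y
      have hback : ureach E (uplus E Y) Y.2 X.1 := ureach_trans hq (ureach_symm hb)
      exact hn (hsp X hX Y hY ⟨hY, Or.inr hfwd⟩ ⟨hX, Or.inr hback⟩)

/-- Lemma 6: a class-level coupling witness can be upgraded to an edge-level one
with the same endpoint. -/
lemma lemma6 {E : Set (V × V)} {C : Set (V × V)} (hCE : C ⊆ E)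
    (hscc : ∀ R ∈ C, ∀ S ∈ C, reach E R.1 S.1)
    {u : V} (h : ∃ R ∈ C, ureach E (Cplus E C) R.2 u) :
    ∃ R' ∈ C, ureach E (uplus E R') R'.2 u := by
  have key : ∀ w, w ∉ Cplus E C → (∃ R₀ ∈ C, reach E R₀.1 w) →
      ∃ R' ∈ C, ureach E (uplus E R') R'.2 w := by
    intro w hw ⟨R₀, hR₀, hr⟩
    have : ¬ ∀ R ∈ C, w ∈ uplus E R := hw
    push_neg at this
    obtain ⟨R'', hR'', hwu⟩ := this
    have hreach : reach E R''.1 w := (hscc R'' hR'' R₀ hR₀).trans hr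
    rcases reach_source_split (hCE hR'') hreach with h' | h'
    · exact absurd h' hwu
    · refine ⟨R'', hR'', reach_avoid_ureach Set.diff_subset ?_ h' hwu⟩
      exact fun x y hx hxy => uplus_closed hx (Relation.ReflTransGen.single hxy)
  obtain ⟨R, hR, ha, p⟩ := h
  induction p with
  | refl =>
    refine key R.2 ha ⟨R, hR, Relation.ReflTransGen.single ?_⟩
    rw [Prod.mk.eta]
    exact hCE hR
  | @tail x c p s ih =>
    obtain ⟨R', hR', w⟩ := ih
    by_cases hc : c ∈ uplus E R'
    · exact key c s.2 ⟨R', hR', uplus_reach hc⟩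
    · exact ⟨R', hR', ureach_tail w s.1 hc⟩

lemma ureach_transfer {E : Set (V × V)} {A A' : Set V} {a b : V}
    (h : ureach E A a b) (hpt : ∀ x, ureach E A a x → x ∉ A') :
    ureach E A' a b := by
  obtain ⟨ha, p⟩ := h
  refine ⟨hpt a ⟨ha, .refl⟩, ?_⟩
  induction p with
  | refl => exact .refl
  | @tail x c p s ih =>
    exact ih.tail ⟨s.1, hpt c ⟨ha, p.tail s⟩⟩

/-- Class-level endpoint adjustment along a directed path. -/
lemma class_adjust {E : Set (V × V)} {C : Set (V × V)} (hCE : C ⊆ E)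
    {u u' : V} (h : ∃ R ∈ C, ureach E (Cplus E C) R.2 u) (hr : reach E u u') :
    u' ∈ Cplus E C ∨ ∃ R' ∈ C, ureach E (Cplus E C) R'.2 u' := by
  induction hr with
  | refl => exact Or.inr h
  | @tail x c p s ih =>
    by_cases hc : c ∈ Cplus E C
    · exact Or.inl hc
    · rcases ih with hx | ⟨R', hR', w⟩
      · by_cases hxc : (x, c) ∈ C
        · exact Or.inr ⟨(x, c), hxc, ⟨hc, .refl⟩⟩
        · refine absurd (fun R hR => uplus_closed (hx R hR)
            (Relation.ReflTransGen.single ⟨s, ?_⟩)) hc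
          intro he
          rw [Set.mem_singleton_iff] at he
          subst he
          exact hxc hR
      · exact Or.inr ⟨R', hR', ureach_tail w (Or.inl s) hc⟩

lemma sameSCC_symm {E : Set (V × V)} {a b : V} (h : sameSCC E a b) : sameSCC E b a :=
  ⟨h.2, h.1⟩

lemma sameSCC_trans {E : Set (V × V)} {a b c : V} (h1 : sameSCC E a b)
    (h2 : sameSCC E b c) : sameSCC E a c :=
  ⟨h1.1.trans h2.1, h2.2.trans h1.2⟩

lemma class_scc {E Ei : Set (V × V)} {C : Set (V × V)} (h : IsClass E Ei C)
    {a b : V × V} (ha : a ∈ C) (hb : b ∈ C) : sameSCC E a.1 b.1 := by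
  obtain ⟨r, hr, rfl⟩ := h
  exact sameSCC_trans (sameSCC_symm ha.2) hb.2

lemma class_subset {E Ei : Set (V × V)} {C : Set (V × V)} (h : IsClass E Ei C) : C ⊆ Ei := by
  obtain ⟨r, hr, rfl⟩ := h
  exact fun S hS => hS.1

lemma class_eq_of_scc {E Ei : Set (V × V)} {C C' : Set (V × V)} (h : IsClass E Ei C)
    (h' : IsClass E Ei C') {a b : V × V} (ha : a ∈ C) (hb : b ∈ C')
    (hscc : sameSCC E a.1 b.1) : C = C' := by
  obtain ⟨r, hr, rfl⟩ := h
  obtain ⟨r', hr', rfl⟩ := h'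
  have key : sameSCC E r.1 r'.1 :=
    sameSCC_trans (sameSCC_trans ha.2 hscc) (sameSCC_symm hb.2)
  ext S
  constructor
  · rintro ⟨h1, h2⟩
    exact ⟨h1, sameSCC_trans (sameSCC_symm key) h2⟩
  · rintro ⟨h1, h2⟩
    exact ⟨h1, sameSCC_trans key h2⟩

/-- Antisymmetry of class-level coupling for distinct classes. -/
lemma class_antisym {E Ec : Set (V × V)} (hsp : Splittable E Ec)
    {C₁ C₂ : Set (V × V)} (h₁ : IsClass E (E \ Ec) C₁) (h₂ : IsClass E (E \ Ec) C₂)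
    (hne : C₁ ≠ C₂)
    (w21 : ∃ R ∈ C₂, ∃ S ∈ C₁, ureach E (Cplus E C₂) R.2 S.1)
    (w12 : ∃ R ∈ C₁, ∃ S ∈ C₂, ureach E (Cplus E C₁) R.2 S.1) : False := by
  have hEi₁ := class_subset h₁
  have hEi₂ := class_subset h₂
  have hC₁E : C₁ ⊆ E := fun S hS => (hEi₁ hS).1
  have hC₂E : C₂ ⊆ E := fun S hS => (hEi₂ hS).1
  obtain ⟨R₂, hR₂, S₁, hS₁, wr⟩ := w21
  obtain ⟨R₁, hR₁, S₂, hS₂, ws⟩ := w12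
  obtain ⟨X, hX, wX⟩ := lemma6 hC₂E (fun a ha b hb => (class_scc h₂ ha hb).1) ⟨R₂, hR₂, wr⟩
  obtain ⟨Y, hY, wY⟩ := lemma6 hC₁E (fun a ha b hb => (class_scc h₁ ha hb).1) ⟨R₁, hR₁, ws⟩
  have hnXY : ¬ sameSCC E X.1 Y.1 := fun hs => hne (class_eq_of_scc h₂ h₁ hX hY hs).symm
  have hnYX : ¬ sameSCC E Y.1 X.1 := fun hs => hne (class_eq_of_scc h₁ h₂ hY hX hs)
  have hY1X : Y.1 ∉ uplus E X := s2_lemma wX (class_scc h₁ hY hS₁).1 hnXY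
  have hX1Y : X.1 ∉ uplus E Y := s2_lemma wY (class_scc h₂ hX hS₂).1 hnYX
  have hfwd : ureach E (uplus E X) X.2 Y.1 := by
    rcases edge_adjust wX (class_scc h₁ hS₁ hY).1 with h | h
    · exact absurd h hY1X
    · exact h
  have hback : ureach E (uplus E Y) Y.2 X.1 := by
    rcases edge_adjust wY (class_scc h₂ hS₂ hX).1 with h | h
    · exact absurd h hX1Y
    · exact h
  exact hnXY (hsp X (hEi₂ hX) Y (hEi₁ hY) ⟨hEi₁ hY, Or.inr hfwd⟩ ⟨hEi₂ hX, Or.inr hback⟩)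

end Aux

open CQA in
/-- in a splittable graph, if C₁ ∈ coupled⁺(C₂) and C₁ ≠ C₂ then
coupled⁺(C₁) ⊊ coupled⁺(C₂). -/
theorem stmt_11 {V : Type*} [Fintype V] (E Ec : Set (V × V)) (hEc : Ec ⊆ E)
    (hsp : Splittable E Ec)
    (C₁ C₂ : Set (V × V)) (h₁ : IsClass E (E \ Ec) C₁) (h₂ : IsClass E (E \ Ec) C₂)
    (hne : C₁ ≠ C₂) (h : coupledPlusCl E C₂ C₁) :
    {C' | IsClass E (E \ Ec) C' ∧ coupledPlusCl E C₁ C'} ⊂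
      {C' | IsClass E (E \ Ec) C' ∧ coupledPlusCl E C₂ C'} := by
  classical
  have hEi₁ := class_subset h₁
  have hEi₂ := class_subset h₂
  have hC₁E : C₁ ⊆ E := fun S hS => (hEi₁ hS).1
  have hC₂E : C₂ ⊆ E := fun S hS => (hEi₂ hS).1
  rcases h with h' | w21
  · exact absurd h' hne
  rw [Set.ssubset_def]
  constructor
  · rintro C' ⟨hC'cls, hcpl⟩
    refine ⟨hC'cls, ?_⟩
    by_cases hC'2 : C' = C₂
    · exact Or.inl hC'2
    rcases hcpl with hC'1 | ⟨R', hR', S', hS', w1'⟩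
    · subst hC'1
      exact Or.inr w21
    · obtain ⟨R₂, hR₂, S₁, hS₁, wr⟩ := w21
      obtain ⟨X, hX, wX⟩ :=
        lemma6 hC₂E (fun a ha b hb => (class_scc h₂ ha hb).1) ⟨R₂, hR₂, wr⟩
      obtain ⟨Y, hY, wY⟩ :=
        lemma6 hC₁E (fun a ha b hb => (class_scc h₁ ha hb).1) ⟨R', hR', w1'⟩
      have hnXY : ¬ sameSCC E X.1 Y.1 := fun hs =>
        hne (class_eq_of_scc h₂ h₁ hX hY hs).symm
      have hY1X : Y.1 ∉ uplus E X := s2_lemma wX (class_scc h₁ hY hS₁).1 hnXY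
      have hfwd : ureach E (uplus E X) X.2 Y.1 := by
        rcases edge_adjust wX (class_scc h₁ hS₁ hY).1 with h' | h'
        · exact absurd h' hY1X
        · exact h'
      have hpt : ∀ z, ureach E (uplus E Y) Y.2 z → z ∉ uplus E X :=
        fun z hz => lemmaZ hsp (hEi₂ hX) (hEi₁ hY) hfwd hnXY hz
      have hXsub : Cplus E C₂ ⊆ uplus E X := fun v hv => hv X hX
      have wYC : ureach E (Cplus E C₂) Y.2 S'.1 :=
        ureach_transfer wY (fun z hz hc => hpt z hz (hXsub hc))
      have hY1C : Y.1 ∉ Cplus E C₂ := fun hc => hY1X (hXsub hc)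
      rcases class_adjust hC₂E ⟨R₂, hR₂, wr⟩ (class_scc h₁ hS₁ hY).1 with h' | ⟨Rt, hRt, w3⟩
      · exact absurd h' hY1C
      have hY2C : Y.2 ∉ Cplus E C₂ :=
        fun hc => hpt Y.2 ⟨wY.1, .refl⟩ (hXsub hc)
      have w4 : ureach E (Cplus E C₂) Rt.2 Y.2 := by
        refine ureach_tail w3 (Or.inl ?_) hY2C
        rw [Prod.mk.eta]
        exact hC₁E hY
      exact Or.inr ⟨Rt, hRt, S', hS', ureach_trans w4 wYC⟩
  · intro hsup
    obtain ⟨-, hcpl⟩ := hsup (⟨h₂, Or.inl rfl⟩ :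
      C₂ ∈ {C' | IsClass E (E \ Ec) C' ∧ coupledPlusCl E C₂ C'})
    rcases hcpl with h' | w12
    · exact hne h'.symm
    · exact class_antisym hsp h₁ h₂ hne w21 w12
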